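/- Let G be a finite subgroup of the orthogonal group O(N,ℝ) acting on ℝᴺ, let f : ℝᴺ → ℝ be a differentiable G-invariant function (f(g·x) = f(x) for all g ∈ G, x ∈ ℝᴺ), and let H be a subgroup of G with fixed subspace V^H = {x ∈ ℝᴺ : h·x = x for all h ∈ H}. If x ∈ V^H and the derivative of f at x vanishes on V^H (i.e., Df(x)(v) = 0 for all v ∈ V^H), then Df(x) = 0, so x is a critical point of f on all of ℝᴺ. -/

import Mathlib

open Matrix

/-- The linear action of a real `N × N` matrix on Euclidean space `ℝᴺ`. -/
noncomputable def actR {N : ℕ} (g : Matrix (Fin N) (Fin N) ℝ) (x : EuclideanSpace ℝ (Fin N)) :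
    EuclideanSpace ℝ (Fin N) :=
  WithLp.toLp 2 (fun i => ∑ j, g i j * x j)

lemma actR_mulVec {N : ℕ} (g : Matrix (Fin N) (Fin N) ℝ) (x : EuclideanSpace ℝ (Fin N)) :
    actR g x = g.mulVec x := rfl

lemma actR_comp {N : ℕ} (g g' : Matrix (Fin N) (Fin N) ℝ) (x : EuclideanSpace ℝ (Fin N)) :
    actR g (actR g' x) = actR (g * g') x := by
  apply WithLp.ofLp_injective
  simp [actR_mulVec, Matrix.mulVec_mulVec]

/-- `actR g` as a continuous linear map. -/
noncomputable def actL {N : ℕ} (g : Matrix (Fin N) (Fin N) ℝ) :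
    EuclideanSpace ℝ (Fin N) →L[ℝ] EuclideanSpace ℝ (Fin N) :=
  LinearMap.toContinuousLinearMap
  { toFun := actR g
    map_add' := by
      intro a b; ext i
      simp [actR, mul_add, Finset.sum_add_distrib]
    map_smul' := by
      intro c a; ext i
      simp [actR, Finset.mul_sum, mul_comm, mul_left_comm] }

lemma actL_apply {N : ℕ} (g : Matrix (Fin N) (Fin N) ℝ) (x : EuclideanSpace ℝ (Fin N)) :
    actL g x = actR g x := rfl

/-- **Principle of Symmetric Criticality, linear orthogonal setting.**
Let `G` be a finite subgroup of `O(N, ℝ)`, `f : ℝᴺ → ℝ` a differentiable `G`-invariant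
function, and `H ≤ G` with fixed subspace `V^H`. If `x ∈ V^H` and `Df(x)` vanishes on
`V^H`, then `Df(x) = 0`. -/
theorem stmt8 (N : ℕ) (G : Finset (Matrix (Fin N) (Fin N) ℝ))
    (hone : (1 : Matrix (Fin N) (Fin N) ℝ) ∈ G)
    (hmul : ∀ g ∈ G, ∀ g' ∈ G, g * g' ∈ G)
    (hinv : ∀ g ∈ G, ∃ g' ∈ G, g * g' = 1)
    (horth : ∀ g ∈ G, gᵀ * g = 1)
    (f : EuclideanSpace ℝ (Fin N) → ℝ)
    (hdiff : Differentiable ℝ f)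
    (hinvf : ∀ g ∈ G, ∀ x : EuclideanSpace ℝ (Fin N), f (actR g x) = f x)
    (H : Finset (Matrix (Fin N) (Fin N) ℝ)) (hHG : H ⊆ G)
    (hHone : (1 : Matrix (Fin N) (Fin N) ℝ) ∈ H)
    (hHmul : ∀ h ∈ H, ∀ h' ∈ H, h * h' ∈ H)
    (x : EuclideanSpace ℝ (Fin N)) (hx : ∀ h ∈ H, actR h x = x)
    (hcrit : ∀ v : EuclideanSpace ℝ (Fin N), (∀ h ∈ H, actR h v = v) → fderiv ℝ f x v = 0) :
    fderiv ℝ f x = 0 := by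
  classical
  -- injectivity of left multiplication by elements of G
  have hinj : ∀ g ∈ G, Function.Injective (fun h : Matrix (Fin N) (Fin N) ℝ => g * h) := by
    intro g hg a b hab
    have hab' : g * a = g * b := hab
    have h2 : gᵀ * (g * a) = gᵀ * (g * b) := by rw [hab']
    rwa [← mul_assoc, ← mul_assoc, horth g hg, one_mul, one_mul] at h2
  -- left translation by h0 ∈ H is a bijection of H
  have himg : ∀ h0 ∈ H, H.image (fun h => h0 * h) = H := by
    intro h0 hh0
    apply Finset.eq_of_subset_of_card_le
    · intro y hy
      obtain ⟨h, hh, rfl⟩ := Finset.mem_image.mp hy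
      exact hHmul h0 hh0 h hh
    · rw [Finset.card_image_of_injective _ (hinj h0 (hHG hh0))]
  -- D (actR h v) = D v for h ∈ H
  have hder : ∀ h ∈ H, ∀ v, fderiv ℝ f x (actR h v) = fderiv ℝ f x v := by
    intro h hh v
    have hfc : f ∘ (actL h) = f := by
      funext y
      simp [Function.comp, actL_apply, hinvf h (hHG hh) y]
    have hcomp : fderiv ℝ (f ∘ (actL h)) x
        = (fderiv ℝ f (actL h x)).comp (fderiv ℝ (actL h) x) :=
      fderiv_comp x (hdiff _) (actL h).differentiableAt
    rw [hfc, (actL h).fderiv] at hcomp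
    have hLx : (actL h) x = x := by rw [actL_apply]; exact hx h hh
    rw [hLx] at hcomp
    have := congrArg (fun T : EuclideanSpace ℝ (Fin N) →L[ℝ] ℝ => T v) hcomp
    simpa [actL_apply] using this.symm
  ext v
  -- the H-average of v
  set w : EuclideanSpace ℝ (Fin N) := (H.card : ℝ)⁻¹ • ∑ h ∈ H, actR h v with hw
  have hcard : (H.card : ℝ) ≠ 0 := by
    have : 0 < H.card := Finset.card_pos.mpr ⟨1, hHone⟩
    exact_mod_cast this.ne'
  have hwfix : ∀ h0 ∈ H, actR h0 w = w := by
    intro h0 hh0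
    have : actR h0 w = actL h0 w := rfl
    rw [this, hw, _root_.map_smul, map_sum]
    congr 1
    calc ∑ h ∈ H, actL h0 (actR h v)
        = ∑ h ∈ H, actR (h0 * h) v := by
          refine Finset.sum_congr rfl fun h _ => ?_
          rw [actL_apply, actR_comp]
      _ = ∑ h ∈ H.image (fun h => h0 * h), actR h v := by
          rw [Finset.sum_image (fun a _ b _ hab => hinj h0 (hHG hh0) hab)]
      _ = ∑ h ∈ H, actR h v := by rw [himg h0 hh0]
  have hDw : fderiv ℝ f x w = 0 := hcrit w hwfix
  have hDw' : fderiv ℝ f x w = fderiv ℝ f x v := by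
    rw [hw, _root_.map_smul, map_sum]
    have : ∀ h ∈ H, fderiv ℝ f x (actR h v) = fderiv ℝ f x v := fun h hh => hder h hh v
    rw [Finset.sum_congr rfl this, Finset.sum_const, nsmul_eq_mul, smul_eq_mul,
      ← mul_assoc, inv_mul_cancel₀ hcard, one_mul]
  simp only [ContinuousLinearMap.zero_apply]
  rw [← hDw', hDw]
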